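/- If an OWA mechanism satisfies w_1 ≥ 1/n and w_n ≥ 1/n, then for every profile x ∈ [0,1]^n and every agent i, |x_i − f(x)| ≤ 1 − 1/n (individual fair share). -/

import Mathlib

noncomputable def owa {n : ℕ} (w x : Fin n → ℝ) : ℝ :=
  ∑ j, w j * x (Tuple.sort x j)

theorem owa_IFS_of_extreme_weights {n : ℕ} (hn : 1 ≤ n)
    (w : Fin n → ℝ) (hw : ∀ j, w j ∈ Set.Icc (0:ℝ) 1) (hsum : ∑ j, w j = 1)
    (h1 : 1 / (n:ℝ) ≤ w ⟨0, by omega⟩) (h2 : 1 / (n:ℝ) ≤ w ⟨n - 1, by omega⟩)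
    (x : Fin n → ℝ) (hx : ∀ j, x j ∈ Set.Icc (0:ℝ) 1) (i : Fin n) :
    |x i - owa w x| ≤ 1 - 1 / n := by
  set σ := Tuple.sort x with hσ
  have hmono : Monotone (x ∘ σ) := Tuple.monotone_sort x
  set i₀ : Fin n := σ⁻¹ i with hi₀
  have hxi : x (σ i₀) = x i := by simp [hi₀]
  have hmin : x (σ ⟨0, by omega⟩) ≤ x i := by
    rw [← hxi]
    exact hmono (by exact Fin.mk_le_mk.mpr (Nat.zero_le _))
  have hmax : x i ≤ x (σ ⟨n - 1, by omega⟩) := by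
    rw [← hxi]
    have hlt : (i₀ : ℕ) < n := i₀.isLt
    exact hmono (show i₀ ≤ ⟨n - 1, by omega⟩ from by rw [Fin.le_def]; show (i₀:ℕ) ≤ n - 1; omega)
  have hnpos : (0:ℝ) < n := by exact_mod_cast hn
  have hinv : 0 < 1 / (n:ℝ) := by positivity
  have hinv1 : 1 / (n:ℝ) ≤ 1 := by
    rw [div_le_one hnpos]; exact_mod_cast hn
  -- lower bound: owa ≥ w_{n-1} * x(σ (n-1))
  have hlow : w ⟨n - 1, by omega⟩ * x (σ ⟨n - 1, by omega⟩) ≤ owa w x := by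
    apply Finset.single_le_sum (f := fun j => w j * x (σ j))
    · intro j _
      exact mul_nonneg (hw j).1 (hx _).1
    · exact Finset.mem_univ _
  -- upper bound: 1 - owa ≥ w_0 * (1 - x(σ 0))
  have hup : w ⟨0, by omega⟩ * (1 - x (σ ⟨0, by omega⟩)) ≤ 1 - owa w x := by
    have : 1 - owa w x = ∑ j, w j * (1 - x (σ j)) := by
      simp [owa, mul_sub, Finset.sum_sub_distrib, mul_one, hsum, hσ]
    rw [this]
    apply Finset.single_le_sum (f := fun j => w j * (1 - x (σ j)))
    · intro j _
      exact mul_nonneg (hw j).1 (by linarith [(hx (σ j)).2])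
    · exact Finset.mem_univ _
  have hxi01 := hx i
  have hxi1 := hxi01.1
  have hxi2 := hxi01.2
  have hwlast := (hw ⟨n - 1, by omega⟩).1
  rw [abs_sub_le_iff]
  constructor
  · nlinarith [mul_le_mul h2 hmax hxi1 hwlast]
  · nlinarith [mul_le_mul h1 (by linarith : 1 - x i ≤ 1 - x (σ ⟨0, by omega⟩)) (by linarith : (0:ℝ) ≤ 1 - x i) (hw ⟨0, by omega⟩).1]
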